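/- Let β > 0, γ > 0 and d ≥ 0, and let x > 0 satisfy d·x < 1 (and also allow d·x = 1 when d > 0, where the value is βx). Then sup{ m − x·m·(d + β/(γ − m)) : m < γ } = (√(γ(1 − dx)) − √(βx))². -/

import Mathlib

/-- For `β > 0`, `γ > 0`, `d ≥ 0`, `x > 0` with `d·x ≤ 1` (the case
`d·x = 1` being possible only when `d > 0`), the rate function of the clock of the
pssMp associated with `ξ_t = d·t + Pois(β,γ)_t` is
`sup {m - x·m·(d + β/(γ-m)) : m < γ} = (√(γ(1-dx)) - √(βx))²`. -/
theorem poisson_drift_clock_rate_function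
    (β γ d x : ℝ) (hβ : 0 < β) (hγ : 0 < γ) (hd : 0 ≤ d) (hx : 0 < x)
    (hdx : d * x ≤ 1) :
    sSup {y : ℝ | ∃ m ∈ Set.Iio γ, y = m - x * (m * (d + β / (γ - m)))}
      = (Real.sqrt (γ * (1 - d * x)) - Real.sqrt (β * x)) ^ 2 := by
  have hA0 : 0 ≤ 1 - d * x := by linarith
  set r := Real.sqrt (1 - d * x) with hr
  set w := Real.sqrt (γ * β * x) with hw
  have hr2 : r ^ 2 = 1 - d * x := Real.sq_sqrt hA0
  have hw2 : w ^ 2 = γ * β * x := Real.sq_sqrt (by positivity)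
  have hr0 : 0 ≤ r := Real.sqrt_nonneg _
  have hw0 : 0 < w := Real.sqrt_pos.2 (by positivity)
  set c := γ * (1 - d * x) + β * x - 2 * (r * w) with hcdef
  have hc : (Real.sqrt (γ * (1 - d * x)) - Real.sqrt (β * x)) ^ 2 = c := by
    have h1 : Real.sqrt (γ * (1 - d * x)) ^ 2 = γ * (1 - d * x) := Real.sq_sqrt (by positivity)
    have h2 : Real.sqrt (β * x) ^ 2 = β * x := Real.sq_sqrt (by positivity)
    have h3 : Real.sqrt (γ * (1 - d * x)) * Real.sqrt (β * x) = r * w := by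
      rw [← Real.sqrt_mul (by positivity), hr, hw, ← Real.sqrt_mul hA0]
      ring_nf
    nlinarith [h1, h2, h3]
  have expand : ∀ m : ℝ, m < γ →
      c - (m - x * (m * (d + β / (γ - m)))) = ((γ - m) * r - w) ^ 2 / (γ - m) := by
    intro m hm
    have hs : (0:ℝ) < γ - m := by linarith
    rw [eq_div_iff hs.ne']
    field_simp
    linear_combination (-(γ - m)^2) * hr2 - hw2
  rw [hc]
  have hub : ∀ y ∈ {y : ℝ | ∃ m ∈ Set.Iio γ, y = m - x * (m * (d + β / (γ - m)))}, y ≤ c := by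
    rintro y ⟨m, hm, rfl⟩
    have hs : (0:ℝ) < γ - m := by linarith [hm.out]
    have h := expand m hm
    nlinarith [div_nonneg (sq_nonneg ((γ - m) * r - w)) hs.le]
  have hbdd : BddAbove {y : ℝ | ∃ m ∈ Set.Iio γ, y = m - x * (m * (d + β / (γ - m)))} := ⟨c, hub⟩
  rcases eq_or_lt_of_le hdx with hdx1 | hdx1
  · -- d*x = 1, c = β*x, sup not attained
    have hA : 1 - d * x = 0 := by linarith
    have hre : r = 0 := by rw [hr, hA, Real.sqrt_zero]
    have hce : c = β * x := by rw [hcdef, hA, hre]; ring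
    refine le_antisymm (csSup_le ⟨_, ⟨0, by simpa using hγ, rfl⟩⟩ hub) ?_
    by_contra hlt
    push_neg at hlt
    set b := sSup {y : ℝ | ∃ m ∈ Set.Iio γ, y = m - x * (m * (d + β / (γ - m)))} with hb
    have hε : 0 < c - b := by linarith
    set s : ℝ := γ * β * x / (c - b) + γ with hsdef
    have hs0 : 0 < s := by positivity
    have hmlt : γ - s < γ := by linarith
    have hmem : (γ - s) - x * ((γ - s) * (d + β / (γ - (γ - s)))) ∈
        {y : ℝ | ∃ m ∈ Set.Iio γ, y = m - x * (m * (d + β / (γ - m)))} :=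
      ⟨γ - s, hmlt, rfl⟩
    have hle : (γ - s) - x * ((γ - s) * (d + β / (γ - (γ - s)))) ≤ b := le_csSup hbdd hmem
    have hexp := expand (γ - s) hmlt
    have hsimp : ((γ - (γ - s)) * r - w) ^ 2 / (γ - (γ - s)) = γ * β * x / s := by
      rw [hre]
      have : (γ - (γ - s)) = s := by ring
      rw [this]
      rw [← hw2]; ring_nf
    rw [hsimp] at hexp
    have hsmall : γ * β * x / s < c - b := by
      rw [div_lt_iff₀ hs0]
      have h2 : (c - b) * s = γ * β * x + (c - b) * γ := by
        rw [hsdef]; field_simp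
      nlinarith [mul_pos hε hγ]
    linarith
  · -- d*x < 1 : sup attained at m = γ - w/r
    have hrpos : 0 < r := Real.sqrt_pos.2 (by linarith)
    set m0 : ℝ := γ - w / r with hm0
    have hwr : 0 < w / r := div_pos hw0 hrpos
    have hm0lt : m0 < γ := by rw [hm0]; linarith
    have hval : c = m0 - x * (m0 * (d + β / (γ - m0))) := by
      have h := expand m0 hm0lt
      have hz : ((γ - m0) * r - w) = 0 := by
        rw [hm0]
        field_simp
        ring
      rw [hz] at h
      simp at h
      linarith
    refine le_antisymm (csSup_le ⟨_, ⟨m0, hm0lt, rfl⟩⟩ hub) ?_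
    exact le_csSup hbdd ⟨m0, hm0lt, hval⟩
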